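/- Let (E, j) be a soft inductive system of normed spaces over a directed set N and let N_0 ⊆ N be a cofinal subset. Then the restriction of (E, j) to indices in N_0 is again a soft inductive system, and its limit space is isometrically isomorphic to the limit space E_∞ of the original system. -/

import Mathlib

open Filter Topology

section SoftSystems

variable {ι : Type*} [Preorder ι] {E : ι → Type*} [∀ n, NormedAddCommGroup (E n)]
  [∀ n, NormedSpace ℂ (E n)]

/-- A *soft inductive system* of normed spaces: the connecting maps `j n m : E m → E n`
(for `m ≤ n`) are linear contractions and are asymptotically transitive:
`lim_m limsup_n ‖(j n l − j n m ∘ j m l) a‖ = 0` for every `l` and `a : E l`. -/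
def IsSoftSystem (j : ∀ n m, E m →L[ℂ] E n) : Prop :=
  (∀ n m, m ≤ n → ‖j n m‖ ≤ 1) ∧
  ∀ (l : ι) (a : E l),
    Tendsto (fun m => limsup (fun n => ‖j n l a - j n m (j m l a)‖) atTop) atTop (𝓝 0)

/-- A net is *j-convergent* if `lim_m limsup_n ‖a n − j n m (a m)‖ = 0`. -/
def JConv (j : ∀ n m, E m →L[ℂ] E n) (a : ∀ n, E n) : Prop :=
  Tendsto (fun m => limsup (fun n => ‖a n - j n m (a m)‖) atTop) atTop (𝓝 0)

/-- A net is *null* if its norms tend to zero along the directed index set. -/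
def IsNullNet (a : ∀ n, E n) : Prop :=
  Tendsto (fun n => ‖a n‖) atTop (𝓝 0)

end SoftSystems

set_option linter.unusedSectionVars false

namespace Stmt6Aux

section RealLemmas

lemma tendsto_zero_of_le {α : Type*} {l : Filter α} {u : α → ℝ}
    (h0 : ∀ᶠ x in l, 0 ≤ u x) (h : ∀ ε : ℝ, 0 < ε → ∀ᶠ x in l, u x ≤ ε) :
    Tendsto u l (𝓝 0) := by
  rw [Metric.tendsto_nhds]
  intro ε hε
  filter_upwards [h0, h (ε / 2) (by positivity)] with x hx1 hx2
  rw [Real.dist_eq, sub_zero, abs_of_nonneg hx1]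
  linarith

lemma limsup_nonneg {α : Type*} {l : Filter α} [l.NeBot] {u : α → ℝ}
    (h0 : ∀ x, 0 ≤ u x) (hb : IsBoundedUnder (· ≤ ·) l u) : 0 ≤ limsup u l :=
  le_limsup_of_frequently_le (Frequently.of_forall h0) hb

end RealLemmas

variable {ι : Type*} [Preorder ι] [Nonempty ι] [IsDirected ι (· ≤ ·)]

section Cof

lemma cof_nonempty {S : Set ι} (hS : ∀ n : ι, ∃ m ∈ S, n ≤ m) : Nonempty S := by
  obtain ⟨m, hm, -⟩ := hS (Classical.arbitrary ι)
  exact ⟨⟨m, hm⟩⟩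

lemma cof_directed {S : Set ι} (hS : ∀ n : ι, ∃ m ∈ S, n ≤ m) :
    IsDirected S (· ≤ ·) := by
  constructor
  rintro ⟨a, ha⟩ ⟨b, hb⟩
  obtain ⟨c, hac, hbc⟩ := exists_ge_ge a b
  obtain ⟨m, hm, hcm⟩ := hS c
  exact ⟨⟨m, hm⟩, Subtype.coe_le_coe.1 (hac.trans hcm), Subtype.coe_le_coe.1 (hbc.trans hcm)⟩

lemma cof_tendsto {S : Set ι} (hS : ∀ n : ι, ∃ m ∈ S, n ≤ m) :
    Tendsto (fun m : S => (m : ι)) atTop atTop := by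
  haveI := cof_nonempty hS
  haveI := cof_directed hS
  rw [tendsto_atTop_atTop]
  intro n
  obtain ⟨m, hm, hnm⟩ := hS n
  exact ⟨⟨m, hm⟩, fun a ha => hnm.trans (Subtype.coe_le_coe.2 ha)⟩

lemma limsup_restrict_le {S : Set ι} [Nonempty S] [IsDirected S (· ≤ ·)]
    (hS : ∀ n : ι, ∃ m ∈ S, n ≤ m) {u : ι → ℝ} (h0 : ∀ n, 0 ≤ u n)
    (hb : IsBoundedUnder (· ≤ ·) atTop u) :
    limsup (fun n : S => u n) atTop ≤ limsup u atTop := by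
  have h1 : limsup (fun n : S => u n) atTop = limsup u (map (fun m : S => (m : ι)) atTop) :=
    limsup_comp u _ _
  rw [h1]
  haveI : (map (fun m : S => (m : ι)) atTop).NeBot := map_neBot
  exact limsup_le_limsup_of_le (cof_tendsto hS)
    (isCoboundedUnder_le_of_le _ fun i => h0 _) hb

end Cof

variable {E : ι → Type*} [∀ n, NormedAddCommGroup (E n)] [∀ n, NormedSpace ℂ (E n)]

lemma coord_bdd (f : lp E ⊤) :
    IsBoundedUnder (· ≤ ·) (atTop : Filter ι) (fun n : ι => ‖f n‖) :=
  isBoundedUnder_of_eventually_le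
    (Eventually.of_forall fun n : ι => lp.norm_apply_le_norm ENNReal.top_ne_zero f n)

lemma isNullNet_of_eventually_zero {f : ∀ i : ι, E i}
    (h : ∀ᶠ n in (atTop : Filter ι), f n = 0) : IsNullNet f := by
  unfold IsNullNet
  refine Tendsto.congr' ?_ (tendsto_const_nhds : Tendsto (fun _ : ι => (0:ℝ)) atTop (𝓝 0))
  filter_upwards [h] with n hn
  rw [hn, norm_zero]

lemma jconv_of_eventually_zero (j : ∀ n m : ι, E m →L[ℂ] E n) {f : ∀ i : ι, E i}
    (h : ∀ᶠ n in (atTop : Filter ι), f n = 0) : JConv j f := by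
  unfold JConv
  refine Tendsto.congr' ?_ (tendsto_const_nhds : Tendsto (fun _ : ι => (0:ℝ)) atTop (𝓝 0))
  filter_upwards [h] with m hm
  have h2 : ∀ᶠ n in (atTop : Filter ι), ‖f n - j n m (f m)‖ = 0 := by
    filter_upwards [h] with n hn
    rw [hm, hn, map_zero, sub_zero, norm_zero]
  symm
  apply le_antisymm
  · exact limsup_le_of_le (isCoboundedUnder_le_of_le _ fun n => norm_nonneg _)
      (h2.mono fun n hn => le_of_eq hn)
  · exact limsup_nonneg (fun n => norm_nonneg _)
      (isBoundedUnder_of_eventually_le (h2.mono fun n hn => hn.le))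

lemma norm_mk_eq_limsup (j : ∀ n m : ι, E m →L[ℂ] E n)
    (C C₀ : Submodule ℂ (lp E ⊤))
    (hC : (C : Set (lp E ⊤)) = {f : lp E ⊤ | JConv j (fun n => f n)})
    (hC₀ : (C₀ : Set (lp E ⊤)) = {f : lp E ⊤ | IsNullNet (fun n => f n)})
    (f : lp E ⊤) (hf : f ∈ C) :
    ‖(Submodule.Quotient.mk (⟨f, hf⟩ : C) : C ⧸ C₀.comap C.subtype)‖
      = limsup (fun n : ι => ‖f n‖) atTop := by
  have hmemC : ∀ g : lp E ⊤, g ∈ C ↔ JConv j (fun n => g n) := fun g => by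
    rw [← SetLike.mem_coe, hC]; exact Iff.rfl
  have hmemC₀ : ∀ g : lp E ⊤, g ∈ C₀ ↔ IsNullNet (fun n => g n) := fun g => by
    rw [← SetLike.mem_coe, hC₀]; exact Iff.rfl
  set L := limsup (fun n : ι => ‖f n‖) atTop with hL
  have hbdd := coord_bdd f
  have hL0 : 0 ≤ L := limsup_nonneg (fun n => norm_nonneg _) hbdd
  apply le_antisymm
  · -- ‖mk‖ ≤ L
    refine le_of_forall_pos_le_add fun ε hε => ?_
    -- build the truncation z
    set zf : ∀ n, E n := fun n => if ‖f n‖ ≤ L + ε then 0 else f n with hzf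
    have hzmem : Memℓp zf ⊤ := by
      apply memℓp_infty
      refine ⟨‖f‖, ?_⟩
      rintro - ⟨n, rfl⟩
      by_cases h : ‖f n‖ ≤ L + ε
      · simp only [hzf, if_pos h, norm_zero]
        exact norm_nonneg f
      · simp only [hzf, if_neg h]
        exact lp.norm_apply_le_norm ENNReal.top_ne_zero f n
    set z : lp E ⊤ := ⟨zf, hzmem⟩ with hzdef
    have hzcoe : ∀ n, z n = zf n := fun n => rfl
    have hev : ∀ᶠ n in (atTop : Filter ι), z n = 0 := by
      have : L < L + ε := by linarith
      filter_upwards [eventually_lt_of_limsup_lt this hbdd] with n hn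
      show (if ‖f n‖ ≤ L + ε then 0 else f n) = 0
      rw [if_pos hn.le]
    have hznull : IsNullNet (fun n => z n) := isNullNet_of_eventually_zero hev
    have hzC : z ∈ C := by
      rw [hmemC]
      exact jconv_of_eventually_zero j hev
    have hkey : Submodule.Quotient.mk (p := C₀.comap C.subtype) (⟨f, hf⟩ : C)
        = Submodule.Quotient.mk (⟨f, hf⟩ - ⟨z, hzC⟩ : C) := by
      rw [Submodule.Quotient.eq]
      have : (⟨f, hf⟩ : C) - (⟨f, hf⟩ - ⟨z, hzC⟩) = ⟨z, hzC⟩ := sub_sub_cancel _ _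
      rw [this]
      rw [Submodule.mem_comap]
      rw [hmemC₀]
      exact hznull
    rw [hkey]
    refine (Submodule.Quotient.norm_mk_le _ _).trans ?_
    rw [Submodule.coe_norm]
    have : ((⟨f, hf⟩ - ⟨z, hzC⟩ : C) : lp E ⊤) = f - z := rfl
    rw [this]
    haveI : Nonempty ι := inferInstance
    apply lp.norm_le_of_forall_le (by linarith : (0:ℝ) ≤ L + ε)
    intro n
    have hsub : (f - z) n = f n - z n := by
      rw [lp.coeFn_sub]; rfl
    rw [hsub, hzcoe, hzf]
    by_cases h : ‖f n‖ ≤ L + ε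
    · simpa [if_pos h] using h
    · simp [if_neg h]
      linarith
  · -- L ≤ ‖mk‖
    refine le_of_forall_pos_le_add fun ε hε => ?_
    obtain ⟨y, hy, hylt⟩ := Submodule.Quotient.norm_mk_lt
      (Submodule.Quotient.mk (p := C₀.comap C.subtype) (⟨f, hf⟩ : C)) hε
    have hdiff : (⟨f, hf⟩ : C) - y ∈ C₀.comap C.subtype := by
      rw [← Submodule.Quotient.eq]
      exact hy.symm
    rw [Submodule.mem_comap, hmemC₀] at hdiff
    have hynorm : L ≤ ‖y‖ := by
      refine le_of_forall_pos_le_add fun ε' hε' => ?_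
      have hnull : Tendsto (fun n : ι => ‖((⟨f, hf⟩ : C) - y : C).1 n‖) atTop (𝓝 0) := hdiff
      refine limsup_le_of_le (isCoboundedUnder_le_of_le _ fun n => norm_nonneg _) ?_
      filter_upwards [hnull.eventually_le_const hε'] with n hn
      have h1 : f n = (y : lp E ⊤) n + ((⟨f, hf⟩ : C) - y : C).1 n := by
        have : ((⟨f, hf⟩ : C) - y : C).1 = f - (y : lp E ⊤) := rfl
        rw [this, lp.coeFn_sub]
        simp
      rw [h1]
      calc ‖(y : lp E ⊤) n + ((⟨f, hf⟩ : C) - y : C).1 n‖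
          ≤ ‖(y : lp E ⊤) n‖ + ‖((⟨f, hf⟩ : C) - y : C).1 n‖ := norm_add_le _ _
        _ ≤ ‖y‖ + ε' := by
            refine add_le_add ?_ hn
            rw [Submodule.coe_norm]
            exact lp.norm_apply_le_norm ENNReal.top_ne_zero _ n
    linarith

lemma j_norm_le (j : ∀ n m : ι, E m →L[ℂ] E n) (hj1 : ∀ n m : ι, m ≤ n → ‖j n m‖ ≤ 1)
    {n m : ι} (h : m ≤ n) (x : E m) : ‖j n m x‖ ≤ ‖x‖ := by
  simpa [one_mul] using (j n m).le_of_opNorm_le_of_le (hj1 n m h) le_rfl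

lemma bdd_tail2 {u : ι → ℝ} (m l : ι) (B : ℝ) (h : ∀ n, m ≤ n → l ≤ n → u n ≤ B) :
    IsBoundedUnder (· ≤ ·) (atTop : Filter ι) u := by
  refine isBoundedUnder_of_eventually_le (a := B) ?_
  filter_upwards [eventually_ge_atTop m, eventually_ge_atTop l] with n h1 h2
  exact h n h1 h2

section Restrict

variable {S : Set ι} [Nonempty S] [IsDirected S (· ≤ ·)]

lemma soft_restrict (hS : ∀ n : ι, ∃ m ∈ S, n ≤ m) (j : ∀ n m : ι, E m →L[ℂ] E n)
    (hj : IsSoftSystem j) : IsSoftSystem (fun n m : S => j n.1 m.1) := by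
  constructor
  · intro n m h
    exact hj.1 n.1 m.1 (Subtype.coe_le_coe.2 h)
  · intro l a
    apply tendsto_zero_of_le
    · refine Eventually.of_forall fun m => limsup_nonneg (fun n => norm_nonneg _) ?_
      refine isBoundedUnder_of_eventually_le (a := ‖a‖ + ‖j m.1 l.1 (a)‖) ?_
      filter_upwards [eventually_ge_atTop m, eventually_ge_atTop l] with n h1 h2
      calc ‖j n.1 l.1 a - j n.1 m.1 (j m.1 l.1 a)‖
          ≤ ‖j n.1 l.1 a‖ + ‖j n.1 m.1 (j m.1 l.1 a)‖ := norm_sub_le _ _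
        _ ≤ ‖a‖ + ‖j m.1 l.1 a‖ :=
            add_le_add (j_norm_le j hj.1 (Subtype.coe_le_coe.2 h2) a)
              (j_norm_le j hj.1 (Subtype.coe_le_coe.2 h1) _)
    · intro ε hε
      have h2 : ∀ᶠ m : ι in atTop,
          limsup (fun n => ‖j n l.1 a - j n m (j m l.1 a)‖) atTop < ε :=
        (hj.2 l.1 a).eventually_lt_const hε
      filter_upwards [(cof_tendsto hS).eventually h2, eventually_ge_atTop l] with m hm hml
      refine le_trans (le_trans (le_of_eq ?_)
        (limsup_restrict_le hS (u := fun n => ‖j n l.1 a - j n m.1 (j m.1 l.1 a)‖)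
          (fun n => norm_nonneg _) ?_)) hm.le
      · rfl
      · refine bdd_tail2 m.1 l.1 (‖a‖ + ‖j m.1 l.1 a‖) fun n h1 h2 => ?_
        calc ‖j n l.1 a - j n m.1 (j m.1 l.1 a)‖
            ≤ ‖j n l.1 a‖ + ‖j n m.1 (j m.1 l.1 a)‖ := norm_sub_le _ _
          _ ≤ ‖a‖ + ‖j m.1 l.1 a‖ :=
              add_le_add (j_norm_le j hj.1 h2 a) (j_norm_le j hj.1 h1 _)

lemma jconv_restrict (hS : ∀ n : ι, ∃ m ∈ S, n ≤ m) (j : ∀ n m : ι, E m →L[ℂ] E n)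
    (hj1 : ∀ n m : ι, m ≤ n → ‖j n m‖ ≤ 1) (f : lp E ⊤) (hf : JConv j (fun n => f n)) :
    JConv (fun n m : S => j n.1 m.1) (fun n : S => f n.1) := by
  apply tendsto_zero_of_le
  · refine Eventually.of_forall fun m => limsup_nonneg (fun n => norm_nonneg _) ?_
    refine isBoundedUnder_of_eventually_le (a := ‖f‖ + ‖f (m:ι)‖) ?_
    filter_upwards [eventually_ge_atTop m] with n h1
    calc ‖f n.1 - j n.1 m.1 (f m.1)‖ ≤ ‖f n.1‖ + ‖j n.1 m.1 (f m.1)‖ := norm_sub_le _ _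
      _ ≤ ‖f‖ + ‖f (m:ι)‖ := add_le_add (lp.norm_apply_le_norm ENNReal.top_ne_zero f n.1)
          (j_norm_le j hj1 (Subtype.coe_le_coe.2 h1) _)
  · intro ε hε
    have h2 : ∀ᶠ m : ι in atTop,
        limsup (fun n => ‖f n - j n m (f m)‖) atTop < ε := hf.eventually_lt_const hε
    filter_upwards [(cof_tendsto hS).eventually h2] with m hm
    refine le_trans (limsup_restrict_le hS (u := fun n => ‖f n - j n m.1 (f m.1)‖)
      (fun n => norm_nonneg _) ?_) hm.le
    refine bdd_tail2 m.1 m.1 (‖f‖ + ‖f (m:ι)‖) fun n h1 _ => ?_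
    calc ‖f n - j n m.1 (f m.1)‖ ≤ ‖f n‖ + ‖j n m.1 (f m.1)‖ := norm_sub_le _ _
      _ ≤ ‖f‖ + ‖f (m:ι)‖ := add_le_add (lp.norm_apply_le_norm ENNReal.top_ne_zero f n)
          (j_norm_le j hj1 h1 _)

lemma null_restrict (hS : ∀ n : ι, ∃ m ∈ S, n ≤ m) {f : ∀ i : ι, E i} (hf : IsNullNet f) :
    IsNullNet (fun n : S => f n.1) :=
  hf.comp (cof_tendsto hS)

lemma limsup_eq_of_restrict (hS : ∀ n : ι, ∃ m ∈ S, n ≤ m) (j : ∀ n m : ι, E m →L[ℂ] E n)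
    (hj1 : ∀ n m : ι, m ≤ n → ‖j n m‖ ≤ 1) (f : lp E ⊤) (hf : JConv j (fun n => f n)) :
    limsup (fun n : S => ‖f n.1‖) atTop = limsup (fun n : ι => ‖f n‖) atTop := by
  refine le_antisymm ?_ ?_
  · exact limsup_restrict_le hS (u := fun n : ι => ‖f n‖) (fun n => norm_nonneg _) (coord_bdd f)
  · refine le_of_forall_pos_le_add fun ε hε => ?_
    set L0 := limsup (fun n : S => ‖f n.1‖) atTop with hL0
    have hbdd0 : IsBoundedUnder (· ≤ ·) (atTop : Filter S) (fun n : S => ‖f n.1‖) :=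
      isBoundedUnder_of_eventually_le
        (Eventually.of_forall fun n : S => lp.norm_apply_le_norm ENNReal.top_ne_zero f n.1)
    have h1 : ∀ᶠ m : S in atTop, ‖f (m:ι)‖ < L0 + ε/2 :=
      eventually_lt_of_limsup_lt (by linarith) hbdd0
    have h2 : ∀ᶠ m : ι in atTop,
        limsup (fun n => ‖f n - j n m (f m)‖) atTop < ε/2 :=
      hf.eventually_lt_const (by linarith)
    obtain ⟨m, hm1, hm2⟩ := (h1.and ((cof_tendsto hS).eventually h2)).exists
    have hbdd2 : IsBoundedUnder (· ≤ ·) (atTop : Filter ι)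
        (fun n : ι => ‖f n - j n m.1 (f m.1)‖) := by
      refine bdd_tail2 m.1 m.1 (‖f‖ + ‖f (m:ι)‖) fun n hn _ => ?_
      calc ‖f n - j n m.1 (f m.1)‖ ≤ ‖f n‖ + ‖j n m.1 (f m.1)‖ := norm_sub_le _ _
        _ ≤ ‖f‖ + ‖f (m:ι)‖ := add_le_add (lp.norm_apply_le_norm ENNReal.top_ne_zero f n)
            (j_norm_le j hj1 hn _)
    have h3 : ∀ᶠ n : ι in atTop, ‖f n - j n m.1 (f m.1)‖ < ε/2 :=
      eventually_lt_of_limsup_lt hm2 hbdd2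
    refine limsup_le_of_le (isCoboundedUnder_le_of_le _ fun n => norm_nonneg _) ?_
    filter_upwards [h3, eventually_ge_atTop m.1] with n hn hn2
    have : f n = (f n - j n m.1 (f m.1)) + j n m.1 (f m.1) := by abel
    rw [this]
    calc ‖(f n - j n m.1 (f m.1)) + j n m.1 (f m.1)‖
        ≤ ‖f n - j n m.1 (f m.1)‖ + ‖j n m.1 (f m.1)‖ := norm_add_le _ _
      _ ≤ ε/2 + ‖f (m:ι)‖ := add_le_add hn.le (j_norm_le j hj1 hn2 _)
      _ ≤ L0 + ε := by linarith

lemma null_of_restrict_null (hS : ∀ n : ι, ∃ m ∈ S, n ≤ m) (j : ∀ n m : ι, E m →L[ℂ] E n)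
    (hj1 : ∀ n m : ι, m ≤ n → ‖j n m‖ ≤ 1) (f : lp E ⊤) (hf : JConv j (fun n => f n))
    (h0 : IsNullNet (fun n : S => f n.1)) : IsNullNet (fun n : ι => f n) := by
  apply tendsto_zero_of_le (Eventually.of_forall fun n => norm_nonneg _)
  intro ε hε
  have h1 : ∀ᶠ m : S in atTop, ‖f (m:ι)‖ < ε/2 := h0.eventually_lt_const (by linarith)
  have h2 : ∀ᶠ m : ι in atTop,
      limsup (fun n => ‖f n - j n m (f m)‖) atTop < ε/4 :=
    hf.eventually_lt_const (by linarith)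
  obtain ⟨m, hm1, hm2⟩ := (h1.and ((cof_tendsto hS).eventually h2)).exists
  have hbdd2 : IsBoundedUnder (· ≤ ·) (atTop : Filter ι)
      (fun n : ι => ‖f n - j n m.1 (f m.1)‖) := by
    refine bdd_tail2 m.1 m.1 (‖f‖ + ‖f (m:ι)‖) fun n hn _ => ?_
    calc ‖f n - j n m.1 (f m.1)‖ ≤ ‖f n‖ + ‖j n m.1 (f m.1)‖ := norm_sub_le _ _
      _ ≤ ‖f‖ + ‖f (m:ι)‖ := add_le_add (lp.norm_apply_le_norm ENNReal.top_ne_zero f n)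
          (j_norm_le j hj1 hn _)
  have h3 : ∀ᶠ n : ι in atTop, ‖f n - j n m.1 (f m.1)‖ < ε/4 :=
    eventually_lt_of_limsup_lt hm2 hbdd2
  filter_upwards [h3, eventually_ge_atTop m.1] with n hn hn2
  have : f n = (f n - j n m.1 (f m.1)) + j n m.1 (f m.1) := by abel
  rw [this]
  calc ‖(f n - j n m.1 (f m.1)) + j n m.1 (f m.1)‖
      ≤ ‖f n - j n m.1 (f m.1)‖ + ‖j n m.1 (f m.1)‖ := norm_add_le _ _
    _ ≤ ε/4 + ‖f (m:ι)‖ := add_le_add hn.le (j_norm_le j hj1 hn2 _)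
    _ ≤ ε := by linarith

end Restrict

variable (E) in
def restrictMap (S : Set ι) : lp E ⊤ →ₗ[ℂ] lp (fun n : S => E n.1) ⊤ where
  toFun f := ⟨fun n => f n.1, by
    apply memℓp_infty
    refine ⟨‖f‖, ?_⟩
    rintro - ⟨n, rfl⟩
    exact lp.norm_apply_le_norm ENNReal.top_ne_zero f n.1⟩
  map_add' f g := by
    ext n
    simp only [lp.coeFn_add, Pi.add_apply]
  map_smul' c f := by
    ext n
    simp only [lp.coeFn_smul, Pi.smul_apply, RingHom.id_apply]

@[simp] lemma restrictMap_apply (S : Set ι) (f : lp E ⊤) (n : S) :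
    (restrictMap E S f : ∀ n : S, E n.1) n = f n.1 := rfl


lemma norm_mk_eq_limsup' (j : ∀ n m : ι, E m →L[ℂ] E n)
    (C C₀ : Submodule ℂ (lp E ⊤))
    (hC : (C : Set (lp E ⊤)) = {f : lp E ⊤ | JConv j (fun n => f n)})
    (hC₀ : (C₀ : Set (lp E ⊤)) = {f : lp E ⊤ | IsNullNet (fun n => f n)})
    (x : C) :
    ‖(Submodule.Quotient.mk x : C ⧸ C₀.comap C.subtype)‖
      = limsup (fun n : ι => ‖(x : lp E ⊤) n‖) atTop :=
  norm_mk_eq_limsup j C C₀ hC hC₀ x.1 x.2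

section Extension

variable {S : Set ι} [Nonempty S] [IsDirected S (· ≤ ·)]

lemma exists_extension (hS : ∀ n : ι, ∃ m ∈ S, n ≤ m) (j : ∀ n m : ι, E m →L[ℂ] E n)
    (hj : IsSoftSystem j) (b : lp (fun n : S => E n.1) ⊤)
    (hb : JConv (fun n m : S => j n.1 m.1) (fun n => b n)) :
    ∃ a : lp E ⊤, JConv j (fun n => a n) ∧ IsNullNet (fun n : S => a n.1 - b n) := by
  classical
  set g : S → ℝ := fun m => limsup (fun n : S => ‖b n - j n.1 m.1 (b m)‖) atTop with hgdef
  have hg : Tendsto g atTop (𝓝 0) := hb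
  have hbB : ∀ n : S, ‖b n‖ ≤ ‖b‖ := fun n =>
    lp.norm_apply_le_norm ENNReal.top_ne_zero b n
  have bddG : ∀ m : S, IsBoundedUnder (· ≤ ·) (atTop : Filter S)
      (fun n : S => ‖b n - j n.1 m.1 (b m)‖) := by
    intro m
    refine bdd_tail2 (ι := S) m m (‖b‖ + ‖b m‖) fun n h1 _ => ?_
    calc ‖b n - j n.1 m.1 (b m)‖ ≤ ‖b n‖ + ‖j n.1 m.1 (b m)‖ := norm_sub_le _ _
      _ ≤ ‖b‖ + ‖b m‖ := add_le_add (hbB n) (j_norm_le j hj.1 (Subtype.coe_le_coe.2 h1) _)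
  by_cases hcnt : ∀ u : ℕ → ι, ∃ v : ι, ∀ k, u k ≤ v
  · -- σ-directed case: perfect anchor exists
    have hth : ∀ k : ℕ, ∃ t : S, ∀ m : S, t ≤ m → g m < 1/((k:ℝ)+1) := by
      intro k
      have h := hg.eventually_lt_const (show (0:ℝ) < 1/((k:ℝ)+1) by positivity)
      rwa [eventually_atTop] at h
    choose t ht using hth
    obtain ⟨v, hv⟩ := hcnt fun k => (t k : ι)
    obtain ⟨q', hq'S, hq'⟩ := hS v
    set q : S := ⟨q', hq'S⟩ with hqdef
    have hgq : g q ≤ 0 := by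
      by_contra h
      push_neg at h
      obtain ⟨k, hk⟩ := exists_nat_one_div_lt h
      have := ht k q (Subtype.coe_le_coe.1 ((hv k).trans hq'))
      linarith
    set af : ∀ n : ι, E n := fun n =>
      if h : (q : ι) ≤ n then j n q.1 (b q) else 0 with hafdef
    have hafB : ∀ n : ι, ‖af n‖ ≤ ‖b q‖ := by
      intro n
      by_cases h : (q : ι) ≤ n
      · rw [hafdef]
        simp only [dif_pos h]
        exact j_norm_le j hj.1 h _
      · rw [hafdef]
        simp only [dif_neg h, norm_zero]
        exact norm_nonneg _
    have hafmem : Memℓp af ⊤ := by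
      apply memℓp_infty
      refine ⟨‖b q‖, ?_⟩
      rintro - ⟨n, rfl⟩
      exact hafB n
    refine ⟨⟨af, hafmem⟩, ?_, ?_⟩
    · -- JConv
      apply tendsto_zero_of_le
      · refine Eventually.of_forall fun m => limsup_nonneg (fun n => norm_nonneg _) ?_
        refine bdd_tail2 m m (‖b q‖ + ‖af m‖) fun n h1 _ => ?_
        calc ‖af n - j n m (af m)‖ ≤ ‖af n‖ + ‖j n m (af m)‖ := norm_sub_le _ _
          _ ≤ ‖b q‖ + ‖af m‖ := add_le_add (hafB n) (j_norm_le j hj.1 h1 _)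
      · intro ε hε
        have h2 := (hj.2 q.1 (b q)).eventually_lt_const hε
        filter_upwards [h2, eventually_ge_atTop (q : ι)] with m hm hqm
        have heq : limsup (fun n : ι => ‖af n - j n m (af m)‖) atTop
            = limsup (fun n : ι => ‖j n q.1 (b q) - j n m (j m q.1 (b q))‖) atTop := by
          apply limsup_congr
          filter_upwards [eventually_ge_atTop (q : ι)] with n hn
          rw [show af n = j n q.1 (b q) from dif_pos hn,
            show af m = j m q.1 (b q) from dif_pos hqm]
        rw [heq]
        exact hm.le
    · -- null restriction
      apply tendsto_zero_of_le (Eventually.of_forall fun n => norm_nonneg _)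
      intro ε hε
      have hlt : limsup (fun n : S => ‖b n - j n.1 q.1 (b q)‖) atTop < ε :=
        lt_of_le_of_lt hgq hε
      have h3 : ∀ᶠ n : S in atTop, ‖b n - j n.1 q.1 (b q)‖ < ε :=
        eventually_lt_of_limsup_lt hlt (bddG q)
      filter_upwards [h3, eventually_ge_atTop q] with n hn hqn
      rw [show af n.1 = j n.1 q.1 (b q) from dif_pos (Subtype.coe_le_coe.2 hqn),
        norm_sub_rev]
      exact hn.le
  · -- there is an unbounded sequence
    push_neg at hcnt
    obtain ⟨d, hd⟩ := hcnt
    set δ : ℕ → ℝ := fun k => (1/2 : ℝ)^k with hδdef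
    have hδpos : ∀ k, 0 < δ k := fun k => by positivity
    have hδmono : ∀ k l : ℕ, k ≤ l → δ l ≤ δ k := fun k l hkl =>
      pow_le_pow_of_le_one (by norm_num) (by norm_num) hkl
    set Pk : ℕ → S → ι → Prop := fun k m c =>
      (m : ι) ≤ c ∧
      (∀ n' : S, c ≤ (n' : ι) → ‖b n' - j n'.1 m.1 (b m)‖ ≤ δ k) ∧
      (∀ mm : ι, c ≤ mm →
        limsup (fun n : ι => ‖j n m.1 (b m) - j n mm (j mm m.1 (b m))‖) atTop ≤ δ k)
      with hPkdef
    have core : ∀ (k : ℕ) (x : ι), ∃ (m : S) (c : ι), Pk k m c ∧ x ≤ c ∧ x ≤ (m : ι) := by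
      intro k x
      obtain ⟨t, htt⟩ : ∃ t : S, ∀ m' : S, t ≤ m' → g m' < δ k / 2 := by
        have h := hg.eventually_lt_const (show (0:ℝ) < δ k / 2 by positivity)
        rwa [eventually_atTop] at h
      obtain ⟨w, hw1, hw2⟩ := exists_ge_ge x (t : ι)
      obtain ⟨m', hm'S, hm'⟩ := hS w
      set m : S := ⟨m', hm'S⟩ with hmdef
      have hgm : g m < δ k := by
        have := htt m (Subtype.coe_le_coe.1 (hw2.trans hm'))
        have := hδpos k
        linarith
      have hA : ∀ᶠ n' : S in atTop, ‖b n' - j n'.1 m.1 (b m)‖ < δ k :=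
        eventually_lt_of_limsup_lt hgm (bddG m)
      rw [eventually_atTop] at hA
      obtain ⟨τ, hτ⟩ := hA
      have hB := (hj.2 m.1 (b m)).eventually_lt_const (hδpos k)
      rw [eventually_atTop] at hB
      obtain ⟨θ, hθ⟩ := hB
      obtain ⟨c1, hc11, hc12⟩ := exists_ge_ge (m' : ι) (τ : ι)
      obtain ⟨c2, hc21, hc22⟩ := exists_ge_ge θ x
      obtain ⟨c, hcc1, hcc2⟩ := exists_ge_ge c1 c2
      refine ⟨m, c, ⟨hc11.trans hcc1, ?_, ?_⟩, hc22.trans hcc2, hw1.trans hm'⟩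
      · intro n' hn'
        exact (hτ n' (Subtype.coe_le_coe.1 ((hc12.trans hcc1).trans hn'))).le
      · intro mm hmm
        exact (hθ mm ((hc21.trans hcc2).trans hmm)).le
    have step : ∀ (k : ℕ) (m : S) (c : ι), Pk k m c → ∃ (m' : S) (c' : ι),
        Pk (k+1) m' c' ∧ c ≤ c' ∧ d (k+1) ≤ c' ∧
        (∀ n : ι, c' ≤ n → ‖j n m.1 (b m) - j n m'.1 (b m')‖ ≤ 3 * δ k) := by
      intro k m c hPkc
      obtain ⟨x0, hx01, hx02⟩ := exists_ge_ge c (d (k+1))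
      obtain ⟨m', c'', hPk', hxc'', hxm'⟩ := core (k+1) x0
      have hcm' : c ≤ (m' : ι) := hx01.trans hxm'
      have hBpair := hPkc.2.2 (m' : ι) hcm'
      have hbddpair : IsBoundedUnder (· ≤ ·) (atTop : Filter ι)
          (fun n : ι => ‖j n m.1 (b m) - j n m'.1 (j m'.1 m.1 (b m))‖) := by
        refine bdd_tail2 m.1 m'.1 (‖b m‖ + ‖j m'.1 m.1 (b m)‖) fun n h1 h2 => ?_
        calc ‖j n m.1 (b m) - j n m'.1 (j m'.1 m.1 (b m))‖
            ≤ ‖j n m.1 (b m)‖ + ‖j n m'.1 (j m'.1 m.1 (b m))‖ := norm_sub_le _ _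
          _ ≤ ‖b m‖ + ‖j m'.1 m.1 (b m)‖ :=
              add_le_add (j_norm_le j hj.1 h1 _) (j_norm_le j hj.1 h2 _)
      have hpt : ∀ᶠ n : ι in atTop,
          ‖j n m.1 (b m) - j n m'.1 (j m'.1 m.1 (b m))‖ < 2 * δ k :=
        eventually_lt_of_limsup_lt (by have := hδpos k; linarith) hbddpair
      rw [eventually_atTop] at hpt
      obtain ⟨θ2, hθ2⟩ := hpt
      have hAm' : ‖b m' - j m'.1 m.1 (b m)‖ ≤ δ k := hPkc.2.1 m' hcm'
      obtain ⟨c3, hc31, hc32⟩ := exists_ge_ge c'' θ2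
      obtain ⟨c', hc'1, hc'2⟩ := exists_ge_ge c3 (m' : ι)
      have hcc' : c'' ≤ c' := hc31.trans hc'1
      refine ⟨m', c', ⟨hPk'.1.trans hcc', fun n' hn' => hPk'.2.1 n' (hcc'.trans hn'),
        fun mm hmm => hPk'.2.2 mm (hcc'.trans hmm)⟩,
        (hx01.trans hxc'').trans hcc', (hx02.trans hxc'').trans hcc', ?_⟩
      intro n hn
      have h1 : ‖j n m.1 (b m) - j n m'.1 (j m'.1 m.1 (b m))‖ < 2 * δ k :=
        hθ2 n (((hc32.trans hc'1)).trans hn)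
      have hm'n : (m' : ι) ≤ n := hc'2.trans hn
      have h2 : ‖j n m'.1 (j m'.1 m.1 (b m)) - j n m'.1 (b m')‖ ≤ δ k := by
        rw [← map_sub]
        refine (j_norm_le j hj.1 hm'n _).trans ?_
        rw [norm_sub_rev]
        exact hAm'
      have hsplit : j n m.1 (b m) - j n m'.1 (b m')
          = (j n m.1 (b m) - j n m'.1 (j m'.1 m.1 (b m)))
            + (j n m'.1 (j m'.1 m.1 (b m)) - j n m'.1 (b m')) := by abel
      rw [hsplit]
      calc ‖(j n m.1 (b m) - j n m'.1 (j m'.1 m.1 (b m)))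
            + (j n m'.1 (j m'.1 m.1 (b m)) - j n m'.1 (b m'))‖
          ≤ ‖j n m.1 (b m) - j n m'.1 (j m'.1 m.1 (b m))‖
            + ‖j n m'.1 (j m'.1 m.1 (b m)) - j n m'.1 (b m')‖ := norm_add_le _ _
        _ ≤ 3 * δ k := by linarith
    -- build the sequence
    obtain ⟨m0, c0, hP0, hd0, -⟩ := core 0 (d 0)
    let T : ℕ → Type _ := fun k => {p : S × ι // Pk k p.1 p.2}
    let stepF : ∀ k, T k → T (k+1) := fun k prev =>
      ⟨⟨(step k prev.1.1 prev.1.2 prev.2).choose,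
        (step k prev.1.1 prev.1.2 prev.2).choose_spec.choose⟩,
        (step k prev.1.1 prev.1.2 prev.2).choose_spec.choose_spec.1⟩
    let F : ∀ k, T k := fun k => Nat.rec ⟨⟨m0, c0⟩, hP0⟩ stepF k
    set msq : ℕ → S := fun k => (F k).1.1 with hmsq
    set csq : ℕ → ι := fun k => (F k).1.2 with hcsq
    have hPseq : ∀ k, Pk k (msq k) (csq k) := fun k => (F k).2
    have hstep : ∀ k, csq k ≤ csq (k+1) ∧ d (k+1) ≤ csq (k+1) ∧
        (∀ n : ι, csq (k+1) ≤ n →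
          ‖j n (msq k).1 (b (msq k)) - j n (msq (k+1)).1 (b (msq (k+1)))‖ ≤ 3 * δ k) :=
      fun k => (step k (msq k) (csq k) (hPseq k)).choose_spec.choose_spec.2
    have hcmono : Monotone csq := monotone_nat_of_le_succ fun k => (hstep k).1
    have pairing := fun k => (hstep k).2.2
    have hdc : ∀ k, d k ≤ csq k := by
      intro k
      cases k with
      | zero => exact hd0
      | succ k => exact (hstep k).2.1
    have hKex : ∀ n : ι, ∃ k, ¬ (csq k ≤ n) := by
      intro n
      obtain ⟨k, hk⟩ := hd n
      exact ⟨k, fun h => hk ((hdc k).trans h)⟩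
    set K : ι → ℕ := fun n => Nat.find (hKex n) with hKdef
    have hKlt : ∀ (n : ι) (k : ℕ), k < K n → csq k ≤ n := fun n k hk =>
      not_not.1 (Nat.find_min (hKex n) hk)
    have hKn : ∀ n : ι, ¬ (csq (K n) ≤ n) := fun n => Nat.find_spec (hKex n)
    have hKge : ∀ (k : ℕ) (n : ι), csq k ≤ n → k < K n := by
      intro k n h
      by_contra hlt
      push_neg at hlt
      exact hKn n ((hcmono hlt).trans h)
    have hKpos : ∀ n : ι, csq 0 ≤ n → 0 < K n := fun n h => hKge 0 n h
    have hmKle : ∀ n : ι, 0 < K n → ((msq (K n - 1)) : ι) ≤ n := by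
      intro n h
      exact le_trans (hPseq (K n - 1)).1 (hKlt n (K n - 1) (by omega))
    set af : ∀ n : ι, E n := fun n =>
      if h : 0 < K n then j n (msq (K n - 1)).1 (b (msq (K n - 1))) else 0 with hafdef
    have hafB : ∀ n : ι, ‖af n‖ ≤ ‖b‖ := by
      intro n
      by_cases h : 0 < K n
      · rw [hafdef]
        simp only [dif_pos h]
        exact (j_norm_le j hj.1 (hmKle n h) _).trans (hbB _)
      · rw [hafdef]
        simp only [dif_neg h, norm_zero]
        exact norm_nonneg _
    have hafmem : Memℓp af ⊤ := by
      apply memℓp_infty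
      exact ⟨‖b‖, by rintro - ⟨n, rfl⟩; exact hafB n⟩
    -- telescoping
    have tele : ∀ (k K' : ℕ), k ≤ K' → ∀ n : ι, csq K' ≤ n →
        ‖j n (msq K').1 (b (msq K')) - j n (msq k).1 (b (msq k))‖ ≤ 6 * (δ k - δ K') := by
      intro k K' hkK'
      induction K', hkK' using Nat.le_induction with
      | base =>
        intro n hn
        simp [sub_self]
      | succ K' hK' ih =>
        intro n hn
        have hn' : csq K' ≤ n := (hcmono (Nat.le_succ K')).trans hn
        have h1 := pairing K' n hn
        have h2 := ih n hn'
        have hsplit : j n (msq (K'+1)).1 (b (msq (K'+1))) - j n (msq k).1 (b (msq k))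
            = (j n (msq (K'+1)).1 (b (msq (K'+1))) - j n (msq K').1 (b (msq K')))
              + (j n (msq K').1 (b (msq K')) - j n (msq k).1 (b (msq k))) := by abel
        rw [hsplit]
        have hδs : δ (K'+1) = δ K' / 2 := by
          simp only [hδdef]
          rw [pow_succ]
          ring
        calc ‖(j n (msq (K'+1)).1 (b (msq (K'+1))) - j n (msq K').1 (b (msq K')))
              + (j n (msq K').1 (b (msq K')) - j n (msq k).1 (b (msq k)))‖
            ≤ ‖j n (msq (K'+1)).1 (b (msq (K'+1))) - j n (msq K').1 (b (msq K'))‖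
              + ‖j n (msq K').1 (b (msq K')) - j n (msq k).1 (b (msq k))‖ := norm_add_le _ _
          _ ≤ 3 * δ K' + 6 * (δ k - δ K') := by
              rw [norm_sub_rev]
              exact add_le_add h1 h2
          _ ≤ 6 * (δ k - δ (K'+1)) := by rw [hδs]; ring_nf; linarith
    refine ⟨⟨af, hafmem⟩, ?_, ?_⟩
    · -- JConv
      apply tendsto_zero_of_le
      · refine Eventually.of_forall fun m => limsup_nonneg (fun n => norm_nonneg _) ?_
        refine bdd_tail2 m m (‖b‖ + ‖af m‖) fun n h1 _ => ?_
        calc ‖af n - j n m (af m)‖ ≤ ‖af n‖ + ‖j n m (af m)‖ := norm_sub_le _ _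
          _ ≤ ‖b‖ + ‖af m‖ := add_le_add (hafB n) (j_norm_le j hj.1 h1 _)
      · intro ε hε
        obtain ⟨k₀, hk₀⟩ : ∃ k₀ : ℕ, 8 * δ k₀ ≤ ε := by
          obtain ⟨k₀, h⟩ := exists_pow_lt_of_lt_one (show (0:ℝ) < ε/8 by positivity)
            (by norm_num : (1/2:ℝ) < 1)
          exact ⟨k₀, by simp only [hδdef]; linarith⟩
        filter_upwards [eventually_ge_atTop (csq k₀)] with m hm
        have hKm : 0 < K m := hKpos m ((hcmono (Nat.zero_le k₀)).trans hm)
        set k := K m - 1 with hkdef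
        have hk₀k : k₀ ≤ k := by
          have := hKge k₀ m hm
          omega
        have hcm : csq k ≤ m := hKlt m k (by omega)
        have ham : af m = j m (msq k).1 (b (msq k)) := dif_pos hKm
        have hB := (hPseq k).2.2 m hcm
        have hbddB : IsBoundedUnder (· ≤ ·) (atTop : Filter ι)
            (fun n : ι => ‖j n (msq k).1 (b (msq k)) - j n m (j m (msq k).1 (b (msq k)))‖) := by
          refine bdd_tail2 (msq k : ι) m (‖b (msq k)‖ + ‖j m (msq k).1 (b (msq k))‖)
            fun n h1 h2 => ?_
          calc ‖j n (msq k).1 (b (msq k)) - j n m (j m (msq k).1 (b (msq k)))‖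
              ≤ ‖j n (msq k).1 (b (msq k))‖ + ‖j n m (j m (msq k).1 (b (msq k)))‖ :=
                norm_sub_le _ _
            _ ≤ ‖b (msq k)‖ + ‖j m (msq k).1 (b (msq k))‖ :=
                add_le_add (j_norm_le j hj.1 h1 _) (j_norm_le j hj.1 h2 _)
        have hptB : ∀ᶠ n : ι in atTop,
            ‖j n (msq k).1 (b (msq k)) - j n m (j m (msq k).1 (b (msq k)))‖ < 2 * δ k :=
          eventually_lt_of_limsup_lt (by have := hδpos k; linarith) hbddB
        refine limsup_le_of_le (isCoboundedUnder_le_of_le _ fun n => norm_nonneg _) ?_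
        filter_upwards [hptB, eventually_ge_atTop (csq k)] with n hn1 hn2
        have hKnpos : 0 < K n := hKpos n ((hcmono (Nat.zero_le k)).trans hn2)
        set K' := K n - 1 with hK'def
        have hkK' : k ≤ K' := by
          have := hKge k n hn2
          omega
        have han : af n = j n (msq K').1 (b (msq K')) := dif_pos hKnpos
        have htele := tele k K' hkK' n (hKlt n K' (by omega))
        have hsplit : af n - j n m (af m)
            = (j n (msq K').1 (b (msq K')) - j n (msq k).1 (b (msq k)))
              + (j n (msq k).1 (b (msq k)) - j n m (j m (msq k).1 (b (msq k)))) := by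
          rw [han, ham]
          abel
        rw [hsplit]
        calc ‖(j n (msq K').1 (b (msq K')) - j n (msq k).1 (b (msq k)))
              + (j n (msq k).1 (b (msq k)) - j n m (j m (msq k).1 (b (msq k))))‖
            ≤ ‖j n (msq K').1 (b (msq K')) - j n (msq k).1 (b (msq k))‖
              + ‖j n (msq k).1 (b (msq k)) - j n m (j m (msq k).1 (b (msq k)))‖ :=
              norm_add_le _ _
          _ ≤ 6 * (δ k - δ K') + 2 * δ k := add_le_add htele hn1.le
          _ ≤ 8 * δ k := by have := hδpos K'; linarith
          _ ≤ 8 * δ k₀ := by have := hδmono k₀ k hk₀k; linarith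
          _ ≤ ε := hk₀
    · -- null restriction
      apply tendsto_zero_of_le (Eventually.of_forall fun n => norm_nonneg _)
      intro ε hε
      obtain ⟨k₀, hk₀⟩ : ∃ k₀ : ℕ, δ k₀ ≤ ε := by
        obtain ⟨k₀, h⟩ := exists_pow_lt_of_lt_one hε (by norm_num : (1/2:ℝ) < 1)
        exact ⟨k₀, by simp only [hδdef]; linarith⟩
      have hev : ∀ᶠ n' : S in atTop, csq k₀ ≤ (n' : ι) :=
        (cof_tendsto hS).eventually (eventually_ge_atTop (csq k₀))
      filter_upwards [hev] with n' hn'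
      have hKpos' : 0 < K n'.1 := hKpos _ ((hcmono (Nat.zero_le k₀)).trans hn')
      set K' := K n'.1 - 1 with hK'def
      have hk : k₀ ≤ K' := by
        have := hKge k₀ n'.1 hn'
        omega
      have han : af n'.1 = j n'.1 (msq K').1 (b (msq K')) := dif_pos hKpos'
      have hA := (hPseq K').2.1 n' (hKlt n'.1 K' (by omega))
      rw [han, norm_sub_rev]
      exact hA.trans ((hδmono k₀ K' hk).trans hk₀)

end Extension

end Stmt6Aux

set_option maxHeartbeats 2000000

/-- Restricting a soft inductive system of normed spaces to a cofinal subset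
`N₀` of the index set gives again a soft inductive system, whose limit space is isometrically
isomorphic to the limit space of the original system. -/
theorem stmt6 {ι : Type*} [Preorder ι] [Nonempty ι] [IsDirected ι (· ≤ ·)]
    {E : ι → Type*} [∀ n, NormedAddCommGroup (E n)] [∀ n, NormedSpace ℂ (E n)]
    (j : ∀ n m, E m →L[ℂ] E n) (hj : IsSoftSystem j)
    (N₀ : Set ι) (hcof : ∀ n : ι, ∃ m ∈ N₀, n ≤ m)
    (C : Submodule ℂ (lp E ⊤)) (C₀ : Submodule ℂ (lp E ⊤))
    (hC : (C : Set (lp E ⊤)) = {f : lp E ⊤ | JConv j (fun n => f n)})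
    (hC₀ : (C₀ : Set (lp E ⊤)) = {f : lp E ⊤ | IsNullNet (fun n => f n)})
    (D : Submodule ℂ (lp (fun n : N₀ => E n.1) ⊤))
    (D₀ : Submodule ℂ (lp (fun n : N₀ => E n.1) ⊤))
    (hD : (D : Set (lp (fun n : N₀ => E n.1) ⊤))
      = {f | JConv (fun (n m : N₀) => j n.1 m.1) (fun n => f n)})
    (hD₀ : (D₀ : Set (lp (fun n : N₀ => E n.1) ⊤)) = {f | IsNullNet (fun n => f n)}) :
    IsSoftSystem (fun (n m : N₀) => j n.1 m.1) ∧
    ∃ ψ : (C ⧸ (C₀.comap C.subtype)) ≃ₗ[ℂ] (D ⧸ (D₀.comap D.subtype)),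
      (∀ x, ‖ψ x‖ = ‖x‖) ∧
      ∀ (a : C) (b : D),
        (∀ n : N₀, (b : lp (fun n : N₀ => E n.1) ⊤) n = (a : lp E ⊤) n.1) →
        ψ (Submodule.Quotient.mk a) = Submodule.Quotient.mk b := by
  haveI hne : Nonempty N₀ := Stmt6Aux.cof_nonempty hcof
  haveI hdir : IsDirected N₀ (· ≤ ·) := Stmt6Aux.cof_directed hcof
  have hmemC : ∀ g : lp E ⊤, g ∈ C ↔ JConv j (fun n => g n) := fun g => by
    rw [← SetLike.mem_coe, hC]; exact Iff.rfl
  have hmemC₀ : ∀ g : lp E ⊤, g ∈ C₀ ↔ IsNullNet (fun n => g n) := fun g => by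
    rw [← SetLike.mem_coe, hC₀]; exact Iff.rfl
  have hmemD : ∀ g : lp (fun n : N₀ => E n.1) ⊤,
      g ∈ D ↔ JConv (fun (n m : N₀) => j n.1 m.1) (fun n => g n) := fun g => by
    rw [← SetLike.mem_coe, hD]; exact Iff.rfl
  have hmemD₀ : ∀ g : lp (fun n : N₀ => E n.1) ⊤,
      g ∈ D₀ ↔ IsNullNet (fun n => g n) := fun g => by
    rw [← SetLike.mem_coe, hD₀]; exact Iff.rfl
  refine ⟨Stmt6Aux.soft_restrict hcof j hj, ?_⟩
  set R : lp E ⊤ →ₗ[ℂ] lp (fun n : N₀ => E n.1) ⊤ := Stmt6Aux.restrictMap E N₀ with hR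
  have hRmem : ∀ x : C, R x.1 ∈ D := fun x => by
    rw [hmemD]
    exact Stmt6Aux.jconv_restrict hcof j hj.1 x.1 ((hmemC x.1).1 x.2)
  set Φ0 : C →ₗ[ℂ] D := (R.comp C.subtype).codRestrict D hRmem with hΦ0
  have hΦ0coe : ∀ (x : C) (n : N₀), ((Φ0 x : lp (fun n : N₀ => E n.1) ⊤) n) = (x : lp E ⊤) n.1 :=
    fun x n => rfl
  set Φ : C →ₗ[ℂ] (D ⧸ D₀.comap D.subtype) := (D₀.comap D.subtype).mkQ.comp Φ0 with hΦ
  have hker : C₀.comap C.subtype ≤ LinearMap.ker Φ := by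
    intro x hx
    rw [LinearMap.mem_ker]
    show Submodule.Quotient.mk (Φ0 x) = 0
    rw [Submodule.Quotient.mk_eq_zero]
    rw [Submodule.mem_comap] at hx ⊢
    rw [hmemD₀]
    have hxnull : IsNullNet (fun n : ι => (x : lp E ⊤) n) := (hmemC₀ _).1 hx
    exact Stmt6Aux.null_restrict hcof hxnull
  set ψ₀ : (C ⧸ C₀.comap C.subtype) →ₗ[ℂ] (D ⧸ D₀.comap D.subtype) :=
    Submodule.liftQ _ Φ hker with hψ₀
  have hψ₀mk : ∀ x : C, ψ₀ (Submodule.Quotient.mk x) = Submodule.Quotient.mk (Φ0 x) :=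
    fun x => rfl
  have hinj : Function.Injective ψ₀ := by
    rw [← LinearMap.ker_eq_bot]
    rw [Submodule.ker_liftQ_eq_bot]
    intro x hx
    rw [LinearMap.mem_ker] at hx
    have h0 : Φ0 x ∈ D₀.comap D.subtype := by
      rw [← Submodule.Quotient.mk_eq_zero (D₀.comap D.subtype)]
      exact hx
    rw [Submodule.mem_comap, hmemD₀] at h0
    rw [Submodule.mem_comap, hmemC₀]
    exact Stmt6Aux.null_of_restrict_null hcof j hj.1 x.1 ((hmemC x.1).1 x.2) h0
  have hsurj : Function.Surjective ψ₀ := by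
    intro y
    obtain ⟨bD, rfl⟩ := Submodule.Quotient.mk_surjective _ y
    obtain ⟨a, haJ, hanull⟩ :=
      Stmt6Aux.exists_extension hcof j hj bD.1 ((hmemD bD.1).1 bD.2)
    have haC : a ∈ C := (hmemC a).2 haJ
    refine ⟨Submodule.Quotient.mk ⟨a, haC⟩, ?_⟩
    rw [hψ₀mk, Submodule.Quotient.eq]
    rw [Submodule.mem_comap, hmemD₀]
    have hcoe : (fun n : N₀ =>
        ((Φ0 ⟨a, haC⟩ - bD : D) : lp (fun n : N₀ => E n.1) ⊤) n)
        = fun n : N₀ => a n.1 - bD.1 n := by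
      funext n
      have h1 : ((Φ0 ⟨a, haC⟩ - bD : D) : lp (fun n : N₀ => E n.1) ⊤)
          = (Φ0 ⟨a, haC⟩ : lp (fun n : N₀ => E n.1) ⊤) - bD.1 := rfl
      rw [h1, lp.coeFn_sub, Pi.sub_apply]
      rfl
    show IsNullNet (fun n : N₀ =>
      ((Φ0 ⟨a, haC⟩ - bD : D) : lp (fun n : N₀ => E n.1) ⊤) n)
    rw [hcoe]
    exact hanull
  set ψ : (C ⧸ C₀.comap C.subtype) ≃ₗ[ℂ] (D ⧸ D₀.comap D.subtype) :=
    LinearEquiv.ofBijective ψ₀ (show Function.Bijective ψ₀ from ⟨hinj, hsurj⟩) with hψ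
  refine ⟨ψ, ?_, ?_⟩
  · intro x
    obtain ⟨xc, rfl⟩ := Submodule.Quotient.mk_surjective _ x
    rw [hψ, LinearEquiv.ofBijective_apply, hψ₀mk xc]
    rw [Stmt6Aux.norm_mk_eq_limsup' (fun n m : N₀ => j n.1 m.1) D D₀ hD hD₀ (Φ0 xc)]
    rw [Stmt6Aux.norm_mk_eq_limsup' j C C₀ hC hC₀ xc]
    have h2 : (fun n : N₀ => ‖(Φ0 xc : lp (fun n : N₀ => E n.1) ⊤) n‖)
        = fun n : N₀ => ‖(xc : lp E ⊤) n.1‖ := rfl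
    rw [h2]
    exact Stmt6Aux.limsup_eq_of_restrict hcof j hj.1 xc.1 ((hmemC xc.1).1 xc.2)
  · intro aC bD hab
    have hΦeq : Φ0 aC = bD := by
      apply Subtype.ext
      apply lp.ext
      funext n
      exact (hab n).symm
    rw [hψ, LinearEquiv.ofBijective_apply, hψ₀mk aC, hΦeq]
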